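/- Let Φ ⊆ k𝔐(X) be a set of multilinear operated polynomial identities and A = kM(Z)/I_A a unital algebra presented by a generating set Z and ideal I_A. Then the free Φ-algebra over A is F^{Φ-Alg}_{uAlg}(A) ≅ k𝔐(Z)/⟨S_Φ(Z) ∪ I_A⟩_{uOpAlg}. -/

import Mathlib

namespace OpAlg

/-- Letters of the free operated monoid `𝔐(Z)`: a letter is either a variable from `Z`
or a bracketed word `⌊w⌋`. -/
inductive OpLetter (Z : Type u) : Type u
  | var : Z → OpLetter Z
  | floor : List (OpLetter Z) → OpLetter Z

/-- The free operated monoid `𝔐(Z)` on a set `Z`: words in variables and brackets. -/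
def OpMonoid (Z : Type u) : Type u := FreeMonoid (OpLetter Z)

instance {Z : Type u} : Monoid (OpMonoid Z) :=
  inferInstanceAs (Monoid (FreeMonoid (OpLetter Z)))

/-- The variable `z` as an element of `𝔐(Z)`. -/
def OpMonoid.ofVar {Z : Type u} (z : Z) : OpMonoid Z := FreeMonoid.of (OpLetter.var z)

/-- The bracket operation `u ↦ ⌊u⌋` on `𝔐(Z)`. -/
def OpMonoid.flr {Z : Type u} (u : OpMonoid Z) : OpMonoid Z :=
  FreeMonoid.of (OpLetter.floor (FreeMonoid.toList u))

/-- The breadth of `u ∈ 𝔐(Z)`. -/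
def OpMonoid.breadth {Z : Type u} (u : OpMonoid Z) : ℕ := (FreeMonoid.toList u).length

variable {X B : Type*} [Monoid B]

mutual
  /-- Evaluation of a letter in a monoid `B` with an operator `P`, sending the
  variable `x` to `σ x`. -/
  def evalLetter (σ : X → B) (P : B → B) : OpLetter X → B
    | .var x => σ x
    | .floor w => P (evalList σ P w)
  /-- Evaluation of a list of letters (product of the letter evaluations). -/
  def evalList (σ : X → B) (P : B → B) : List (OpLetter X) → B
    | [] => 1
    | a :: w => evalLetter σ P a * evalList σ P w
end

/-- Evaluation of a word `w ∈ 𝔐(X)` in a monoid `B` with operator `P` at `σ : X → B`. -/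
def evalWord (σ : X → B) (P : B → B) (w : OpMonoid X) : B :=
  evalList σ P (FreeMonoid.toList w)

/-- Monoid-level substitution `𝔐(X) → 𝔐(Z)`, `xᵢ ↦ σ xᵢ`. -/
def substW {X Z : Type*} (σ : X → OpMonoid Z) : OpMonoid X → OpMonoid Z :=
  evalWord σ OpMonoid.flr

/-- The free unital operated algebra `k𝔐(Z)` (as a `k`-module: the monoid algebra). -/
abbrev kOpM (k : Type*) [Field k] (Z : Type*) := MonoidAlgebra k (OpMonoid Z)

/-- The operator `P` on `k𝔐(Z)`: linear extension of `u ↦ ⌊u⌋`. -/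
noncomputable def opP (k : Type*) [Field k] {Z : Type*} (f : kOpM k Z) : kOpM k Z :=
  MonoidAlgebra.ofCoeff (Finsupp.mapDomain OpMonoid.flr f.coeff)

/-- Evaluation of `φ ∈ k𝔐(X)` in a `k`-algebra `B` with operator `P` at `σ : X → B`:
`φ(σ x₁, …, σ xₙ)`. -/
noncomputable def evalPoly (k : Type*) [Field k] {X B : Type*} [Semiring B] [Module k B]
    (σ : X → B) (P : B → B) (φ : MonoidAlgebra k (OpMonoid X)) : B :=
  φ.coeff.sum fun w c => c • evalWord σ P w

/-- A context `q ∈ 𝔐⋆(Z)` : a word in `𝔐(Z ∪ {⋆})` with exactly one occurrence of `⋆`. -/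
inductive OpCtx (Z : Type u) : Type u
  | hole (u v : OpMonoid Z)
  | floor (u : OpMonoid Z) (q : OpCtx Z) (v : OpMonoid Z)

/-- Substitution `q|_w` of a word `w` for `⋆` in a context `q`. -/
def OpCtx.subst {Z : Type u} : OpCtx Z → OpMonoid Z → OpMonoid Z
  | .hole u v, w => u * w * v
  | .floor u q v, w => u * OpMonoid.flr (q.subst w) * v

/-- Substitution `q|_f` of a polynomial `f ∈ k𝔐(Z)` for `⋆` in a context `q`. -/
noncomputable def ctxPoly (k : Type*) [Field k] {Z : Type*} (q : OpCtx Z) (f : kOpM k Z) :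
    kOpM k Z :=
  MonoidAlgebra.ofCoeff (Finsupp.mapDomain q.subst f.coeff)

/-- The leading monomial of an element of a monoid algebra (the monomial `1` if the
element is a scalar or zero). -/
noncomputable def lm {k : Type*} [Field k] {G : Type*} [Monoid G] [LinearOrder G]
    (f : MonoidAlgebra k G) : G :=
  if h : f.coeff.support.Nonempty then f.coeff.support.max' h else 1

/-- Division of an element by its leading coefficient. -/
noncomputable def monicize {k : Type*} [Field k] {G : Type*} [Monoid G] [LinearOrder G]
    (f : MonoidAlgebra k G) : MonoidAlgebra k G :=
  (f.coeff (lm f))⁻¹ • f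

section GS
variable (k : Type*) [Field k] {Z : Type*} [LinearOrder (OpMonoid Z)]

/-- `f` is trivial modulo `(𝒢, w)` : `f = Σᵢ cᵢ qᵢ|_{sᵢ}` with `qᵢ|_{s̄ᵢ} < w`, `sᵢ ∈ 𝒢`. -/
def TrivialMod (𝒢 : Set (kOpM k Z)) (w : OpMonoid Z) (f : kOpM k Z) : Prop :=
  f ∈ Submodule.span k
    {g : kOpM k Z | ∃ s ∈ 𝒢, ∃ q : OpCtx Z, g = ctxPoly k q s ∧ q.subst (lm s) < w}

/-- `𝒢 ⊆ k𝔐(Z)` is an operated Gröbner–Shirshov basis: all intersection compositions and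
all inclusion compositions of (monicized) pairs of elements of `𝒢` are trivial. -/
def IsOpGS (𝒢 : Set (kOpM k Z)) : Prop :=
  (∀ f ∈ 𝒢, ∀ g ∈ 𝒢, ∀ u v w : OpMonoid Z,
      w = lm f * u → w = v * lm g →
      max (OpMonoid.breadth (lm f)) (OpMonoid.breadth (lm g)) < OpMonoid.breadth w →
      OpMonoid.breadth w < OpMonoid.breadth (lm f) + OpMonoid.breadth (lm g) →
      TrivialMod k 𝒢 w
        (monicize f * MonoidAlgebra.single u 1 - MonoidAlgebra.single v 1 * monicize g)) ∧
  (∀ f ∈ 𝒢, ∀ g ∈ 𝒢, ∀ q : OpCtx Z, ∀ w : OpMonoid Z,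
      w = lm f → w = q.subst (lm g) →
      TrivialMod k 𝒢 w (monicize f - ctxPoly k q (monicize g)))

end GS

section Assoc
variable (k : Type*) [Field k] {Z : Type*} [LinearOrder (FreeMonoid Z)]

/-- The free unital algebra `kM(Z)` (noncommutative polynomials). -/
abbrev kM (k : Type*) [Field k] (Z : Type*) := MonoidAlgebra k (FreeMonoid Z)

/-- Triviality modulo `(G, w)` in the classical associative sense. -/
def ATrivialMod (G : Set (kM k Z)) (w : FreeMonoid Z) (f : kM k Z) : Prop :=
  f ∈ Submodule.span k
    {g : kM k Z | ∃ s ∈ G, ∃ u v : FreeMonoid Z,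
      g = MonoidAlgebra.single u 1 * s * MonoidAlgebra.single v 1 ∧ u * lm s * v < w}

/-- `G ⊆ kM(Z)` is a Gröbner–Shirshov basis in the classical associative sense. -/
def IsAssocGS (G : Set (kM k Z)) : Prop :=
  (∀ f ∈ G, ∀ g ∈ G, ∀ u v w : FreeMonoid Z,
      w = lm f * u → w = v * lm g →
      max (FreeMonoid.toList (lm f)).length (FreeMonoid.toList (lm g)).length <
        (FreeMonoid.toList w).length →
      (FreeMonoid.toList w).length <
        (FreeMonoid.toList (lm f)).length + (FreeMonoid.toList (lm g)).length →
      ATrivialMod k G w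
        (monicize f * MonoidAlgebra.single u 1 - MonoidAlgebra.single v 1 * monicize g)) ∧
  (∀ f ∈ G, ∀ g ∈ G, ∀ u v w : FreeMonoid Z,
      w = lm f → w = u * lm g * v →
      ATrivialMod k G w
        (monicize f -
          MonoidAlgebra.single u 1 * monicize g * MonoidAlgebra.single v 1))

end Assoc

/-- The embedding of the free monoid `M(Z)` into the free operated monoid `𝔐(Z)`. -/
def embW {Z : Type*} (w : FreeMonoid Z) : OpMonoid Z :=
  (FreeMonoid.map (OpLetter.var) w : FreeMonoid (OpLetter Z))

/-- The embedding `kM(Z) → k𝔐(Z)`. -/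
noncomputable def embA (k : Type*) [Field k] {Z : Type*} (f : kM k Z) : kOpM k Z :=
  MonoidAlgebra.ofCoeff (Finsupp.mapDomain embW f.coeff)

end OpAlg

namespace OpAlg

variable {X : Type*} [DecidableEq X]

mutual
  /-- Number of occurrences of the variable `x` in a letter. -/
  def countLetter (x : X) : OpLetter X → ℕ
    | .var y => if y = x then 1 else 0
    | .floor w => countList x w
  /-- Number of occurrences of the variable `x` in a list of letters. -/
  def countList (x : X) : List (OpLetter X) → ℕ
    | [] => 0
    | a :: w => countLetter x a + countList x w
end

variable (k : Type*) [Field k]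

/-- An OPI `φ ∈ k𝔐(X)` is multilinear if every monomial in its support contains every
variable exactly once. -/
def Multilinear (φ : kOpM k X) : Prop :=
  ∀ w ∈ φ.coeff.support, ∀ x : X, countList x (FreeMonoid.toList w) = 1

/-- A unital operated `k`-algebra `(B, P)` is a `Φ`-algebra if every OPI of `Φ` vanishes
under every evaluation of the variables in `B`. -/
noncomputable def IsPhiAlgebra {X : Type*} (Φ : Set (kOpM k X)) (B : Type*) [Ring B]
    [Algebra k B] (P : B → B) : Prop :=
  ∀ φ ∈ Φ, ∀ σ : X → B, evalPoly k σ P φ = 0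

/-- `S_Φ(Z)` : all substitution instances `φ(u₁, …, uₖ)`, `uᵢ ∈ 𝔐(Z)`, `φ ∈ Φ`. -/
noncomputable def SPhi {X Z : Type*} (Φ : Set (kOpM k X)) : Set (kOpM k Z) :=
  {x : kOpM k Z | ∃ φ ∈ Φ, ∃ σ : X → OpMonoid Z, x = MonoidAlgebra.ofCoeff (Finsupp.mapDomain (substW σ) φ.coeff)}

/-- The congruence of the quotient of `k𝔐(Z)` by the operated ideal generated by `S`. -/
noncomputable def opIdealCon {Z : Type*} (S : Set (kOpM k Z)) : RingCon (kOpM k Z) :=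
  sInf {c : RingCon (kOpM k Z) |
    (∀ s ∈ S, c s 0) ∧ (∀ x y, c x y → c (opP k x) (opP k y)) ∧
    (∀ (r : k) (x y), c x y → c (r • x) (r • y))}

end OpAlg

namespace OpAlg

section MonoidLemmas

variable {X Z B : Type*} [Monoid B]

theorem evalList_eq_prod (σ : X → B) (P : B → B) (l : List (OpLetter X)) :
    evalList σ P l = (l.map (evalLetter σ P)).prod := by
  induction l with
  | nil => rfl
  | cons a w ih => rw [evalList, ih, List.map_cons, List.prod_cons]

theorem freeMonoidLift_eq_evalWord (σ : X → B) (P : B → B) (w : OpMonoid X) :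
    FreeMonoid.lift (evalLetter σ P) w = evalWord σ P w := by
  exact (FreeMonoid.lift_apply _ _).trans (evalList_eq_prod σ P _).symm

theorem evalWord_mul (σ : X → B) (P : B → B) (u v : OpMonoid X) :
    evalWord σ P (u * v) = evalWord σ P u * evalWord σ P v := by
  rw [← freeMonoidLift_eq_evalWord, ← freeMonoidLift_eq_evalWord, ← freeMonoidLift_eq_evalWord]
  exact map_mul (FreeMonoid.lift (evalLetter σ P)) u v

theorem evalWord_one (σ : X → B) (P : B → B) :
    evalWord σ P (1 : OpMonoid X) = 1 := rfl

theorem evalWord_of (σ : X → B) (P : B → B) (a : OpLetter X) :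
    evalWord σ P (FreeMonoid.of a) = evalLetter σ P a := by
  show evalLetter σ P a * 1 = evalLetter σ P a
  rw [mul_one]

theorem evalWord_flr (σ : X → B) (P : B → B) (u : OpMonoid X) :
    evalWord σ P (OpMonoid.flr u) = P (evalWord σ P u) := by
  rw [OpMonoid.flr, evalWord_of, evalLetter]
  rfl

mutual
  theorem eval_subst_letter (τ : Z → B) (P : B → B) (σ' : X → OpMonoid Z) :
      ∀ a : OpLetter X, evalWord τ P (evalLetter σ' OpMonoid.flr a)
        = evalLetter (fun x => evalWord τ P (σ' x)) P a
    | .var x => rfl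
    | .floor l => by
        rw [evalLetter, evalWord_flr, eval_subst_list τ P σ' l, evalLetter]
  theorem eval_subst_list (τ : Z → B) (P : B → B) (σ' : X → OpMonoid Z) :
      ∀ l : List (OpLetter X), evalWord τ P (evalList σ' OpMonoid.flr l)
        = evalList (fun x => evalWord τ P (σ' x)) P l
    | [] => rfl
    | a :: l => by
        rw [evalList, evalWord_mul, eval_subst_letter τ P σ' a, eval_subst_list τ P σ' l,
          evalList]
end

theorem eval_substW (τ : Z → B) (P : B → B) (σ' : X → OpMonoid Z) (w : OpMonoid X) :
    evalWord τ P (substW σ' w) = evalWord (fun x => evalWord τ P (σ' x)) P w :=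
  eval_subst_list τ P σ' (FreeMonoid.toList w)

theorem evalWord_embW (σ : Z → B) (P : B → B) (w : FreeMonoid Z) :
    evalWord σ P (embW w) = FreeMonoid.lift σ w := by
  rw [← freeMonoidLift_eq_evalWord, embW, FreeMonoid.lift_apply, FreeMonoid.lift_apply,
    FreeMonoid.toList_map, List.map_map]
  rfl

end MonoidLemmas

section EvalHom

variable {k : Type*} [Field k] {Z B : Type*} [Ring B] [Algebra k B]

/-- The evaluation algebra homomorphism `k𝔐(Z) → B`. -/
noncomputable def evalHom (σ : Z → B) (P : B → B) : kOpM k Z →ₐ[k] B :=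
  MonoidAlgebra.lift k B (OpMonoid Z) (FreeMonoid.lift (evalLetter σ P) : OpMonoid Z →* B)

theorem evalHom_single (σ : Z → B) (P : B → B) (u : OpMonoid Z) (c : k) :
    evalHom σ P (MonoidAlgebra.single u c) = c • evalWord σ P u := by
  rw [evalHom]
  exact (MonoidAlgebra.lift_single (FreeMonoid.lift (evalLetter σ P) : OpMonoid Z →* B) u c).trans
    (congrArg (c • ·) (freeMonoidLift_eq_evalWord σ P u))

theorem evalHom_apply (σ : Z → B) (P : B → B) (x : kOpM k Z) :
    evalHom σ P x = x.coeff.sum fun u c => c • evalWord σ P u := by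
  conv_lhs => rw [← MonoidAlgebra.sum_coeff_single x]
  rw [map_finsuppSum]
  exact Finsupp.sum_congr fun u _ => evalHom_single σ P u _

theorem evalHom_mapDomain (σ : Z → B) (P : B → B) {α : Type*} (h : α → OpMonoid Z)
    (x : α →₀ k) :
    evalHom σ P (MonoidAlgebra.ofCoeff (Finsupp.mapDomain h x)) = x.sum fun u c => c • evalWord σ P (h u) := by
  rw [Finsupp.mapDomain, MonoidAlgebra.ofCoeff_finsuppSum, map_finsuppSum]
  exact Finsupp.sum_congr fun u _ => evalHom_single σ P (h u) _

theorem evalHom_opP (σ : Z → B) (P : B →ₗ[k] B) (x : kOpM k Z) :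
    evalHom σ (⇑P) (opP k x) = P (evalHom σ (⇑P) x) := by
  rw [opP, evalHom_mapDomain, evalHom_apply, map_finsuppSum]
  exact Finsupp.sum_congr fun u _ => by rw [evalWord_flr, map_smul]

mutual
  theorem ringHom_eval_letter (σ : Z → B) (P : B → B) (G : kOpM k Z →+* B)
      (h2 : ∀ x : kOpM k Z, G (opP k x) = P (G x))
      (h3 : ∀ z : Z, G (MonoidAlgebra.single (FreeMonoid.of (OpLetter.var z)) 1) = σ z) :
      ∀ a : OpLetter Z, G (MonoidAlgebra.single (FreeMonoid.of a) (1 : k)) = evalLetter σ P a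
    | .var z => h3 z
    | .floor l => by
        have : (MonoidAlgebra.single (FreeMonoid.of (OpLetter.floor l)) (1 : k) : kOpM k Z)
            = opP k (MonoidAlgebra.single (FreeMonoid.ofList l) 1) := by
          exact (congrArg MonoidAlgebra.ofCoeff (Finsupp.mapDomain_single (f := OpMonoid.flr)
            (a := (FreeMonoid.ofList l : OpMonoid Z)) (b := (1 : k)))).symm
        rw [this, h2, ringHom_eval_list σ P G h2 h3 l, evalLetter]
  theorem ringHom_eval_list (σ : Z → B) (P : B → B) (G : kOpM k Z →+* B)
      (h2 : ∀ x : kOpM k Z, G (opP k x) = P (G x))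
      (h3 : ∀ z : Z, G (MonoidAlgebra.single (FreeMonoid.of (OpLetter.var z)) 1) = σ z) :
      ∀ l : List (OpLetter Z),
        G (MonoidAlgebra.single (FreeMonoid.ofList l) (1 : k)) = evalList σ P l
    | [] => by
        have : (MonoidAlgebra.single (FreeMonoid.ofList ([] : List (OpLetter Z))) (1 : k)
            : kOpM k Z) = 1 := rfl
        rw [this, map_one]; rfl
    | a :: l => by
        have : (MonoidAlgebra.single (FreeMonoid.ofList (a :: l)) (1 : k) : kOpM k Z)
            = (MonoidAlgebra.single (FreeMonoid.of a) 1 : kOpM k Z)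
              * (MonoidAlgebra.single (FreeMonoid.ofList l) 1 : kOpM k Z) := by
          exact ((MonoidAlgebra.single_mul_single (M := OpMonoid Z) (FreeMonoid.of a)
            (FreeMonoid.ofList l) (1 : k) 1).trans (congrArg (MonoidAlgebra.single
              ((FreeMonoid.of a : OpMonoid Z) * FreeMonoid.ofList l)) (one_mul (1 : k)))).symm
        rw [this, map_mul, ringHom_eval_letter σ P G h2 h3 a, ringHom_eval_list σ P G h2 h3 l,
          evalList]
end

theorem ringHom_eq_evalHom (σ : Z → B) (P : B → B) (G : kOpM k Z →+* B)
    (h1 : ∀ r : k, G (algebraMap k (kOpM k Z) r) = algebraMap k B r)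
    (h2 : ∀ x : kOpM k Z, G (opP k x) = P (G x))
    (h3 : ∀ z : Z, G (MonoidAlgebra.single (FreeMonoid.of (OpLetter.var z)) 1) = σ z)
    (x : kOpM k Z) : G x = evalHom σ P x := by
  conv_lhs => rw [← MonoidAlgebra.sum_coeff_single x]
  rw [map_finsuppSum, evalHom_apply]
  refine Finsupp.sum_congr fun u _ => ?_
  show G (MonoidAlgebra.single u (x.coeff u)) = x.coeff u • evalWord σ P u
  have hsingle : (MonoidAlgebra.single u (x.coeff u) : kOpM k Z)
      = algebraMap k (kOpM k Z) (x.coeff u) * MonoidAlgebra.single u 1 := by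
    rw [← Algebra.smul_def, MonoidAlgebra.smul_single', mul_one]
  rw [hsingle, map_mul, h1, ← Algebra.smul_def]
  congr 1
  have := ringHom_eval_list σ P G h2 h3 (FreeMonoid.toList u)
  exact this

end EvalHom

end OpAlg

namespace OpAlg

section EmbA

variable {k : Type*} [Field k] {Z B : Type*} [Ring B] [Algebra k B]

theorem evalHom_embA (P : B → B) (g : kM k Z →ₐ[k] B) (x : kM k Z) :
    evalHom (fun z => g (MonoidAlgebra.single (FreeMonoid.of z) 1)) P (embA k x) = g x := by
  set σ : Z → B := fun z => g (MonoidAlgebra.single (FreeMonoid.of z) 1) with hσ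
  rw [embA, evalHom_mapDomain]
  conv_rhs => rw [← MonoidAlgebra.sum_coeff_single x, map_finsuppSum]
  refine Finsupp.sum_congr fun w _ => ?_
  show (x.coeff w) • evalWord σ P (embW w) = g (MonoidAlgebra.single w (x.coeff w))
  have h1 : (MonoidAlgebra.single w (x.coeff w) : kM k Z) = (x.coeff w) • MonoidAlgebra.single w 1 := by
    rw [MonoidAlgebra.smul_single', mul_one]
  rw [evalWord_embW, h1, map_smul]
  congr 1
  have hm : g.toRingHom.toMonoidHom.comp (MonoidAlgebra.of k (FreeMonoid Z))
      = FreeMonoid.lift σ := by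
    refine FreeMonoid.hom_eq fun z => ?_
    show g (MonoidAlgebra.single (FreeMonoid.of z) 1) = σ z
    rw [hσ]
  exact (DFunLike.congr_fun hm w).symm

end EmbA

end OpAlg


open OpAlg in
/-- Let `Φ ⊆ k𝔐(X)` be a set of multilinear OPIs and
`A = kM(Z)/I_A` a unital algebra presented by a generating set `Z` (via a surjection
`π : kM(Z) → A` with kernel `I_A`). Then `k𝔐(Z)/⟨S_Φ(Z) ∪ I_A⟩_{uOpAlg}` is the free
`Φ`-algebra over `A`. -/
theorem free_Phi_algebra_presentation
    (k : Type*) [Field k] (X Z : Type*) [DecidableEq X]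
    (Φ : Set (kOpM k X)) (hml : ∀ φ ∈ Φ, Multilinear k φ)
    (A : Type*) [Ring A] [Algebra k A]
    (π : kM k Z →ₐ[k] A) (hπ : Function.Surjective π) :
    -- `I_A := ker π`, and the quotient is the free `Φ`-algebra over `A`:
    ∀ (B : Type*) [Ring B] [Algebra k B], ∀ (P_B : B →ₗ[k] B),
      IsPhiAlgebra k Φ B P_B → ∀ f : A →ₐ[k] B,
      ∃! F : (opIdealCon k (SPhi k (X := X) (Z := Z) Φ ∪
          embA k '' {x : kM k Z | π x = 0})).Quotient →+* B,
        (∀ r : k,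
          F ((algebraMap k (kOpM k Z) r : kOpM k Z) : (opIdealCon k
              (SPhi k (X := X) (Z := Z) Φ ∪
                embA k '' {x : kM k Z | π x = 0})).Quotient) = algebraMap k B r) ∧
        (∀ x : kOpM k Z,
          F ((opP k x : kOpM k Z) : (opIdealCon k (SPhi k (X := X) (Z := Z) Φ ∪
              embA k '' {x : kM k Z | π x = 0})).Quotient) =
            P_B (F ((x : kOpM k Z) : (opIdealCon k (SPhi k (X := X) (Z := Z) Φ ∪
              embA k '' {x : kM k Z | π x = 0})).Quotient))) ∧
        (∀ x : kM k Z,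
          F ((embA k x : kOpM k Z) : (opIdealCon k (SPhi k (X := X) (Z := Z) Φ ∪
              embA k '' {x : kM k Z | π x = 0})).Quotient) = f (π x)) := by
  intro B _ _ P_B hPhi f
  set S : Set (kOpM k Z) := SPhi k (X := X) (Z := Z) Φ ∪ embA k '' {x : kM k Z | π x = 0}
    with hS
  set c : RingCon (kOpM k Z) := opIdealCon k S with hc
  set σ : Z → B := fun z => (f.comp π) (MonoidAlgebra.single (FreeMonoid.of z) 1) with hσ
  set Θ : kOpM k Z →ₐ[k] B := evalHom σ ⇑P_B with hΘ
  -- the kernel congruence of Θ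
  set kerc : RingCon (kOpM k Z) :=
    { r := fun x y => Θ x = Θ y
      iseqv := ⟨fun _ => rfl, Eq.symm, Eq.trans⟩
      mul' := fun h h' => by simp only [map_mul]; rw [h, h']
      add' := fun h h' => by simp only [map_add]; rw [h, h'] } with hkerc
  have hmem : kerc ∈ {d : RingCon (kOpM k Z) |
      (∀ s ∈ S, d s 0) ∧ (∀ x y, d x y → d (opP k x) (opP k y)) ∧
      (∀ (r : k) (x y), d x y → d (r • x) (r • y))} := by
    refine ⟨?_, ?_, ?_⟩
    · rintro s hs
      show Θ s = Θ 0
      rw [map_zero]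
      rcases hs with hs | ⟨x, hx, rfl⟩
      · obtain ⟨φ, hφ, σ', rfl⟩ := hs
        rw [hΘ, evalHom_mapDomain]
        have h0 := hPhi φ hφ (fun x => evalWord σ ⇑P_B (σ' x))
        rw [evalPoly] at h0
        rw [← h0]
        exact Finsupp.sum_congr fun w _ => by rw [eval_substW]
      · have : Θ (embA k x) = (f.comp π) x := evalHom_embA ⇑P_B (f.comp π) x
        rw [this]
        show f (π x) = 0
        rw [hx, map_zero]
    · intro x y h
      show Θ (opP k x) = Θ (opP k y)
      rw [hΘ, evalHom_opP, evalHom_opP]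
      exact congrArg P_B h
    · intro r x y h
      show Θ (r • x) = Θ (r • y)
      rw [map_smul, map_smul]
      exact congrArg (r • ·) h
  have hker : ∀ x y : kOpM k Z, c x y → Θ x = Θ y := by
    intro x y h
    exact (sInf_le hmem : c ≤ kerc) h
  refine ⟨{ toFun := Quotient.lift ⇑Θ fun a b h => hker a b h
            map_one' := map_one Θ
            map_mul' := fun x y => Quotient.inductionOn₂ x y fun a b => map_mul Θ a b
            map_zero' := map_zero Θ
            map_add' := fun x y => Quotient.inductionOn₂ x y fun a b => map_add Θ a b },
    ⟨fun r => Θ.commutes r, fun x => evalHom_opP σ P_B x,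
      fun x => evalHom_embA ⇑P_B (f.comp π) x⟩, ?_⟩
  rintro F' ⟨h1, h2, h3⟩
  refine RingHom.ext fun q => ?_
  refine Quotient.inductionOn q fun x => ?_
  show F' (c.mk' x) = Θ x
  refine ringHom_eq_evalHom σ ⇑P_B (F'.comp c.mk') (fun r => h1 r) (fun y => h2 y)
    (fun z => ?_) x
  have he : (MonoidAlgebra.single (FreeMonoid.of (OpLetter.var z)) (1 : k) : kOpM k Z)
      = embA k (MonoidAlgebra.single (FreeMonoid.of z) 1) := by
    exact (congrArg MonoidAlgebra.ofCoeff (Finsupp.mapDomain_single (f := embW)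
      (a := FreeMonoid.of z) (b := (1 : k)))).symm
  show F' (c.mk' (MonoidAlgebra.single (FreeMonoid.of (OpLetter.var z)) (1 : k))) = σ z
  rw [he]
  exact h3 (MonoidAlgebra.single (FreeMonoid.of z) 1)
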